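/- In the ring of formal power series ℝ⟦X⟧, the product of the two (p,q)-exponential series satisfies e_{p,q}(X) · E_{p,q}(−X) = 1, where E_{p,q}(−X) denotes the series ∑_{n=0}^{∞} (−1)^n q^{n(n−1)/2} X^n/[n]_{p,q}!. Equivalently, for every n ≥ 1, ∑_{k=0}^{n} [n choose k]_{p,q} (−1)^k q^{k(k−1)/2} p^{(n−k)(n−k−1)/2} = 0. -/

import Mathlib

noncomputable section
open Finset Polynomial

/-- The (p,q)-number `[n]_{p,q} = (p^n - q^n)/(p - q)`. -/
def pqNum (p q : ℝ) (n : ℕ) : ℝ := (p ^ n - q ^ n) / (p - q)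

/-- The (p,q)-factorial `[n]_{p,q}! = ∏_{k=1}^n [k]_{p,q}`. -/
def pqFact (p q : ℝ) (n : ℕ) : ℝ := ∏ k ∈ Finset.Icc 1 n, pqNum p q k

/-- The (p,q)-binomial coefficient. -/
def pqBinom (p q : ℝ) (n k : ℕ) : ℝ := pqFact p q n / (pqFact p q k * pqFact p q (n - k))

/-- The (p,q)-derivative on polynomials: the linear operator with `D(X^n) = [n]_{p,q} X^(n-1)`. -/
def pqDeriv (p q : ℝ) (f : Polynomial ℝ) : Polynomial ℝ :=
  f.sum fun n a => Polynomial.C (a * pqNum p q n) * Polynomial.X ^ (n - 1)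

/-- The (p,q)-derivative on formal power series, acting coefficientwise by
`D(X^n) = [n]_{p,q} X^(n-1)`. -/
def pqDerivPS (p q : ℝ) (f : PowerSeries ℝ) : PowerSeries ℝ :=
  PowerSeries.mk fun n => pqNum p q (n + 1) * PowerSeries.coeff (R := ℝ) (n + 1) f

/-- The double (p,q)-factorial `[2m]_{p,q}!! = ∏_{k=1}^m [2k]_{p,q}`. -/
def pqDoubleFact (p q : ℝ) (m : ℕ) : ℝ := ∏ k ∈ Finset.Icc 1 m, pqNum p q (2 * k)

/-- A sequence of real polynomials of exact degree `n` is (p,q)-Appell when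
`D_{p,q} f_{n+1}(x) = [n+1]_{p,q} f_n(p x)` for all `n ≥ 0` and all `x`. -/
def IsPQAppell (p q : ℝ) (f : ℕ → Polynomial ℝ) : Prop :=
  (∀ n, (f n).natDegree = n) ∧
    ∀ (n : ℕ) (x : ℝ), (pqDeriv p q (f (n + 1))).eval x = pqNum p q (n + 1) * (f n).eval (p * x)

namespace PQAux

variable {p q : ℝ}

lemma num_pos (hq : 0 < q) (hpq : q < p) {k : ℕ} (hk : 1 ≤ k) : 0 < pqNum p q k := by
  have h1 : q ^ k < p ^ k := pow_lt_pow_left₀ hpq hq.le (by omega)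
  exact div_pos (by linarith) (by linarith)

lemma fact_zero (p q : ℝ) : pqFact p q 0 = 1 := by simp [pqFact]

lemma fact_succ (p q : ℝ) (n : ℕ) : pqFact p q (n+1) = pqFact p q n * pqNum p q (n+1) := by
  rw [pqFact, pqFact, Finset.prod_Icc_succ_top (by omega : 1 ≤ n + 1)]

lemma fact_pos (hq : 0 < q) (hpq : q < p) (n : ℕ) : 0 < pqFact p q n :=
  Finset.prod_pos fun k hk => num_pos hq hpq (Finset.mem_Icc.mp hk).1

lemma num_add (hpq : q < p) (a b : ℕ) :
    pqNum p q (a + b) = p ^ a * pqNum p q b + q ^ b * pqNum p q a := by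
  have h : p - q ≠ 0 := by intro h; linarith [sub_eq_zero.mp h]
  unfold pqNum
  field_simp
  ring

lemma binom_apply (p q : ℝ) (n k : ℕ) :
    pqBinom p q n k = pqFact p q n / (pqFact p q k * pqFact p q (n-k)) := rfl

lemma binom_zero (hq : 0 < q) (hpq : q < p) (n : ℕ) : pqBinom p q n 0 = 1 := by
  rw [pqBinom, fact_zero, Nat.sub_zero, one_mul, div_self (fact_pos hq hpq n).ne']

lemma binom_self (hq : 0 < q) (hpq : q < p) (n : ℕ) : pqBinom p q n n = 1 := by
  rw [pqBinom, Nat.sub_self, fact_zero, mul_one, div_self (fact_pos hq hpq n).ne']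

lemma tri_succ (m : ℕ) : (m+1) * ((m+1) - 1) / 2 = m * (m-1)/2 + m := by
  have h : (m+1).choose 2 = m.choose 1 + m.choose 2 := Nat.choose_succ_succ m 1
  rw [Nat.choose_two_right, Nat.choose_two_right, Nat.choose_one_right] at h
  rw [h, Nat.add_comm]

lemma tri_succ' (m : ℕ) : (m+1) * m / 2 = m * (m-1)/2 + m := by
  have h := tri_succ m
  simpa using h

lemma pascal (hq : 0 < q) (hpq : q < p) (j m : ℕ) :
    pqBinom p q (j+m+1+1) (j+1) =
      p ^ (j+1) * pqBinom p q (j+m+1) (j+1) + q ^ (m+1) * pqBinom p q (j+m+1) j := by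
  have hFj := (fact_pos hq hpq j).ne'
  have hFm := (fact_pos hq hpq m).ne'
  have hj1 := (num_pos hq hpq (k := j+1) (by omega)).ne'
  have hm1 := (num_pos hq hpq (k := m+1) (by omega)).ne'
  rw [binom_apply, binom_apply, binom_apply,
    (by omega : j+m+1+1 - (j+1) = m+1), (by omega : j+m+1 - (j+1) = m),
    (by omega : j+m+1 - j = m+1), fact_succ p q (j+m+1), fact_succ p q m, fact_succ p q j,
    (by omega : j+m+1+1 = (j+1)+(m+1)), num_add hpq (j+1) (m+1)]
  field_simp

def Ssum (p q : ℝ) (n : ℕ) : ℝ :=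
  ∑ k ∈ Finset.range (n + 1),
    pqBinom p q n k * (-1 : ℝ) ^ k * q ^ (k * (k - 1) / 2) * p ^ ((n - k) * (n - k - 1) / 2)

lemma Ssum_rec (hq : 0 < q) (hpq : q < p) (n : ℕ) :
    Ssum p q (n+1) = (p^n - q^n) * Ssum p q n := by
  have key : ∀ k ∈ Finset.range (n+2),
      pqBinom p q (n+1) k * (-1 : ℝ) ^ k * q ^ (k * (k-1) / 2) * p ^ ((n+1-k) * (n+1-k-1) / 2)
        = (if k ≤ n then
            p^n * (pqBinom p q n k * (-1 : ℝ) ^ k * q ^ (k * (k-1) / 2) * p ^ ((n-k) * (n-k-1) / 2))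
           else 0)
          + (if 1 ≤ k then
            -(q^n) * (pqBinom p q n (k-1) * (-1 : ℝ) ^ (k-1) * q ^ ((k-1) * (k-1-1) / 2)
              * p ^ ((n-(k-1)) * (n-(k-1)-1) / 2))
           else 0) := by
    intro k hk
    have hk2 : k < n + 2 := Finset.mem_range.mp hk
    rcases Nat.eq_zero_or_pos k with rfl | hk1
    · rw [if_pos (Nat.zero_le n), if_neg (by omega)]
      simp only [Nat.sub_zero, pow_zero, mul_one, one_mul, add_zero]
      rw [binom_zero hq hpq, binom_zero hq hpq, tri_succ, pow_add]
      ring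
    by_cases hkn : k ≤ n
    · obtain ⟨j, rfl⟩ : ∃ j, k = j + 1 := ⟨k-1, by omega⟩
      obtain ⟨m, rfl⟩ : ∃ m, n = j + m + 1 := ⟨n-j-1, by omega⟩
      rw [if_pos hkn, if_pos (show (1:ℕ) ≤ j + 1 by omega)]
      simp only [Nat.add_sub_cancel]
      rw [(by omega : j+m+1+1 - (j+1) = m+1), (by omega : j+m+1 - (j+1) = m),
        (by omega : j+m+1 - j = m+1), pascal hq hpq j m, tri_succ, tri_succ']
      ring
    · obtain rfl : k = n + 1 := by omega
      rw [if_neg hkn, if_pos (show (1:ℕ) ≤ n + 1 by omega)]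
      simp only [Nat.add_sub_cancel, Nat.sub_self, Nat.zero_mul, Nat.zero_div, pow_zero,
        mul_one, zero_add]
      rw [binom_self hq hpq, binom_self hq hpq, tri_succ', pow_add]
      ring
  rw [Ssum, Finset.sum_congr rfl key, Finset.sum_add_distrib]
  have h1 : ∑ k ∈ Finset.range (n+2),
      (if k ≤ n then
        p^n * (pqBinom p q n k * (-1 : ℝ) ^ k * q ^ (k * (k-1) / 2) * p ^ ((n-k) * (n-k-1) / 2))
       else 0)
      = p^n * Ssum p q n := by
    rw [Finset.sum_range_succ, if_neg (by omega : ¬ (n+1 ≤ n)), add_zero, Ssum, Finset.mul_sum]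
    refine Finset.sum_congr rfl fun k hk => ?_
    rw [if_pos (Nat.lt_succ_iff.mp (Finset.mem_range.mp hk))]
  have h2 : ∑ k ∈ Finset.range (n+2),
      (if 1 ≤ k then
        -(q^n) * (pqBinom p q n (k-1) * (-1 : ℝ) ^ (k-1) * q ^ ((k-1) * (k-1-1) / 2)
          * p ^ ((n-(k-1)) * (n-(k-1)-1) / 2))
       else 0)
      = -(q^n) * Ssum p q n := by
    rw [Finset.sum_range_succ', if_neg (by omega : ¬ (1:ℕ) ≤ 0), add_zero, Ssum, Finset.mul_sum]
    refine Finset.sum_congr rfl fun k hk => ?_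
    rw [if_pos (by omega : (1:ℕ) ≤ k + 1)]
    simp only [Nat.add_sub_cancel]
  rw [h1, h2]
  ring

lemma Ssum_eq_zero (hq : 0 < q) (hpq : q < p) {n : ℕ} (hn : 1 ≤ n) : Ssum p q n = 0 := by
  induction n with
  | zero => omega
  | succ m ih =>
    rcases Nat.eq_zero_or_pos m with rfl | hm
    · simp [Ssum, Finset.sum_range_succ, binom_zero hq hpq, binom_self hq hpq]
    · rw [Ssum_rec hq hpq, ih hm, mul_zero]

end PQAux

/-- e(X) * E(-X) = 1 in the formal power series ring; equivalently the
alternating (p,q)-binomial sums vanish for n >= 1. -/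
theorem pq_exponentials_inverse (p q : ℝ) (hq : 0 < q) (hpq : q < p) :
    (PowerSeries.mk fun n => p ^ (n * (n - 1) / 2) / pqFact p q n) *
        (PowerSeries.mk fun n => (-1 : ℝ) ^ n * q ^ (n * (n - 1) / 2) / pqFact p q n) = 1 ∧
      ∀ n : ℕ, 1 ≤ n →
        ∑ k ∈ Finset.range (n + 1),
          pqBinom p q n k * (-1 : ℝ) ^ k * q ^ (k * (k - 1) / 2) * p ^ ((n - k) * (n - k - 1) / 2)
            = 0 := by
  constructor
  · ext n
    rw [PowerSeries.coeff_mul]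
    rcases Nat.eq_zero_or_pos n with rfl | hn
    · simp [PQAux.fact_zero, PowerSeries.coeff_one]
    · obtain ⟨m, rfl⟩ : ∃ m, n = m + 1 := ⟨n-1, by omega⟩
      rw [Finset.Nat.sum_antidiagonal_eq_sum_range_succ_mk,
        PowerSeries.coeff_one, if_neg (by omega)]
      rw [← Finset.sum_range_reflect]
      have key : ∀ j ∈ Finset.range (m+2),
          (PowerSeries.coeff (R := ℝ) (m + 2 - 1 - j))
              (PowerSeries.mk fun n => p ^ (n * (n - 1) / 2) / pqFact p q n) *
            (PowerSeries.coeff (R := ℝ) (m + 1 - (m + 2 - 1 - j)))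
              (PowerSeries.mk fun n => (-1 : ℝ) ^ n * q ^ (n * (n - 1) / 2) / pqFact p q n)
          = (pqBinom p q (m+1) j * (-1 : ℝ) ^ j * q ^ (j * (j - 1) / 2)
              * p ^ ((m + 1 - j) * (m + 1 - j - 1) / 2)) / pqFact p q (m+1) := by
        intro j hj
        have hj2 : j < m + 2 := Finset.mem_range.mp hj
        rw [(by omega : m + 2 - 1 - j = m + 1 - j), (by omega : m + 1 - (m + 1 - j) = j)]
        simp only [PowerSeries.coeff_mk]
        have hFj := (PQAux.fact_pos hq hpq j).ne'
        have hFmj := (PQAux.fact_pos hq hpq (m + 1 - j)).ne'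
        have hFm1 := (PQAux.fact_pos hq hpq (m + 1)).ne'
        rw [PQAux.binom_apply]
        field_simp
      rw [Finset.sum_congr rfl key, ← Finset.sum_div]
      have : (∑ j ∈ Finset.range (m+2),
          pqBinom p q (m+1) j * (-1 : ℝ) ^ j * q ^ (j * (j - 1) / 2)
            * p ^ ((m + 1 - j) * (m + 1 - j - 1) / 2)) = 0 :=
        PQAux.Ssum_eq_zero hq hpq (by omega)
      rw [this, zero_div]
  · intro n hn
    exact PQAux.Ssum_eq_zero hq hpq hn
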